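/- For integers n, k, r, s with 0 ≤ s ≤ r and k ≤ n/2 - 1, let G(k,s) = [Σ_{ℓ=0}^r |s-ℓ|·C(n-k,ℓ)·C(k,r-ℓ)]/(n-k). Then G(k+1,s) - G(k,s) = s·[Σ_{ℓ=0}^s C(n-k,ℓ)C(k,r-ℓ) - Σ_{ℓ=s+1}^r C(n-k,ℓ)C(k,r-ℓ)] / [(n-k)(n-k-1)]. -/
import Mathlib

open Finset

private theorem stmt16_key (m k r s : ℕ) (hs : s ≤ r) (hm2 : 2 ≤ m) :
    (m : ℝ) * (∑ ℓ ∈ Finset.range (r + 1),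
        |(s : ℝ) - ℓ| * ((m - 1).choose ℓ : ℝ) * ((k+1).choose (r - ℓ) : ℝ))
    - ((m : ℝ) - 1) * (∑ ℓ ∈ Finset.range (r + 1),
        |(s : ℝ) - ℓ| * (m.choose ℓ : ℝ) * (k.choose (r - ℓ) : ℝ))
    = (s : ℝ) *
        ((∑ ℓ ∈ Finset.range (s + 1), (m.choose ℓ : ℝ) * (k.choose (r - ℓ) : ℝ))
          - ∑ ℓ ∈ Finset.Icc (s + 1) r, (m.choose ℓ : ℝ) * (k.choose (r - ℓ) : ℝ)) := by
  -- step 1: m * C(m-1,ℓ) = (m-ℓ) * C(m,ℓ)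
  have hB : ∀ ℓ : ℕ, (m : ℝ) * ((m - 1).choose ℓ : ℝ) = ((m - ℓ : ℕ) : ℝ) * (m.choose ℓ : ℝ) := by
    intro ℓ
    have h := Nat.choose_mul_succ_eq (m - 1) ℓ
    rw [Nat.sub_add_cancel (by omega)] at h
    have h' := congrArg (Nat.cast (R := ℝ)) h
    push_cast at h'
    linarith
  have hstep1 : (m : ℝ) * (∑ ℓ ∈ Finset.range (r + 1),
        |(s : ℝ) - ℓ| * ((m - 1).choose ℓ : ℝ) * ((k+1).choose (r - ℓ) : ℝ))
      = ∑ ℓ ∈ Finset.range (r + 1),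
        |(s : ℝ) - ℓ| * ((m - ℓ : ℕ) : ℝ) * (m.choose ℓ : ℝ) * ((k+1).choose (r - ℓ) : ℝ) := by
    rw [Finset.mul_sum]
    refine Finset.sum_congr rfl fun ℓ _ => ?_
    linear_combination (|(s : ℝ) - ℓ| * ((k+1).choose (r - ℓ) : ℝ)) * hB ℓ
  -- step 2: Pascal split
  have hstep2 : (∑ ℓ ∈ Finset.range (r + 1),
        |(s : ℝ) - ℓ| * ((m - ℓ : ℕ) : ℝ) * (m.choose ℓ : ℝ) * ((k+1).choose (r - ℓ) : ℝ))
      = (∑ ℓ ∈ Finset.range (r + 1),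
          |(s : ℝ) - ℓ| * ((m - ℓ : ℕ) : ℝ) * (m.choose ℓ : ℝ) * (k.choose (r - ℓ) : ℝ))
        + ∑ ℓ ∈ Finset.range r,
          |(s : ℝ) - ℓ| * ((m - ℓ : ℕ) : ℝ) * (m.choose ℓ : ℝ) * (k.choose (r - 1 - ℓ) : ℝ) := by
    rw [Finset.sum_range_succ, Finset.sum_range_succ
      (f := fun ℓ => |(s : ℝ) - ℓ| * ((m - ℓ : ℕ) : ℝ) * (m.choose ℓ : ℝ) * (k.choose (r - ℓ) : ℝ))]
    have hlast : |(s : ℝ) - r| * ((m - r : ℕ) : ℝ) * (m.choose r : ℝ) * ((k+1).choose (r - r) : ℝ)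
        = |(s : ℝ) - r| * ((m - r : ℕ) : ℝ) * (m.choose r : ℝ) * (k.choose (r - r) : ℝ) := by
      simp [Nat.sub_self]
    rw [hlast]
    have hmain : (∑ ℓ ∈ Finset.range r,
        |(s : ℝ) - ℓ| * ((m - ℓ : ℕ) : ℝ) * (m.choose ℓ : ℝ) * ((k+1).choose (r - ℓ) : ℝ))
      = (∑ ℓ ∈ Finset.range r,
          |(s : ℝ) - ℓ| * ((m - ℓ : ℕ) : ℝ) * (m.choose ℓ : ℝ) * (k.choose (r - ℓ) : ℝ))
        + ∑ ℓ ∈ Finset.range r,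
          |(s : ℝ) - ℓ| * ((m - ℓ : ℕ) : ℝ) * (m.choose ℓ : ℝ) * (k.choose (r - 1 - ℓ) : ℝ) := by
      rw [← Finset.sum_add_distrib]
      refine Finset.sum_congr rfl fun ℓ hℓ => ?_
      have hℓr : ℓ < r := Finset.mem_range.mp hℓ
      have h1 : r - ℓ = (r - 1 - ℓ) + 1 := by omega
      rw [h1, Nat.choose_succ_succ']
      push_cast
      ring
    rw [hmain]
    ring
  -- step 3: reindex
  have hstep3 : (∑ ℓ ∈ Finset.range r,
        |(s : ℝ) - ℓ| * ((m - ℓ : ℕ) : ℝ) * (m.choose ℓ : ℝ) * (k.choose (r - 1 - ℓ) : ℝ))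
      = ∑ ℓ ∈ Finset.range (r + 1),
          |(s : ℝ) - ℓ + 1| * (ℓ : ℝ) * (m.choose ℓ : ℝ) * (k.choose (r - ℓ) : ℝ) := by
    rw [Finset.sum_range_succ'
      (f := fun ℓ => |(s : ℝ) - ℓ + 1| * (ℓ : ℝ) * (m.choose ℓ : ℝ) * (k.choose (r - ℓ) : ℝ))]
    simp only [Nat.cast_zero, mul_zero, zero_mul, add_zero]
    refine Finset.sum_congr rfl fun i hi => ?_
    have hir : i < r := Finset.mem_range.mp hi
    have h1 : r - (i + 1) = r - 1 - i := by omega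
    have h2 : (m.choose (i+1) : ℝ) * ((i : ℝ) + 1) = ((m - i : ℕ) : ℝ) * (m.choose i : ℝ) := by
      have h' := congrArg (Nat.cast (R := ℝ)) (Nat.choose_succ_right_eq m i)
      push_cast at h'
      linarith
    have h3 : |(s : ℝ) - (i + 1 : ℕ) + 1| = |(s : ℝ) - i| := by
      push_cast; ring_nf
    rw [h1]
    push_cast
    rw [show ((s : ℝ) - ((i : ℝ) + 1) + 1) = (s : ℝ) - i by ring]
    linear_combination -|(s : ℝ) - i| * (k.choose (r - 1 - i) : ℝ) * h2
  rw [hstep1, hstep2, hstep3, Finset.mul_sum, ← Finset.sum_add_distrib,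
    ← Finset.sum_sub_distrib]
  have hper : ∀ ℓ ∈ Finset.range (r + 1),
      (|(s : ℝ) - ℓ| * ((m - ℓ : ℕ) : ℝ) * (m.choose ℓ : ℝ) * (k.choose (r - ℓ) : ℝ)
        + |(s : ℝ) - ℓ + 1| * (ℓ : ℝ) * (m.choose ℓ : ℝ) * (k.choose (r - ℓ) : ℝ))
      - ((m : ℝ) - 1) * (|(s : ℝ) - ℓ| * (m.choose ℓ : ℝ) * (k.choose (r - ℓ) : ℝ))
      = (if ℓ ≤ s then (s : ℝ) else -(s : ℝ)) * ((m.choose ℓ : ℝ) * (k.choose (r - ℓ) : ℝ)) := by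
    intro ℓ _
    by_cases hlm : ℓ ≤ m
    · have hc : ((m - ℓ : ℕ) : ℝ) = (m : ℝ) - ℓ := by
        rw [Nat.cast_sub hlm]
      by_cases hls : ℓ ≤ s
      · have hls' : (ℓ : ℝ) ≤ (s : ℝ) := by exact_mod_cast hls
        rw [if_pos hls, hc, abs_of_nonneg (by linarith : (0:ℝ) ≤ (s : ℝ) - ℓ),
          abs_of_nonneg (by linarith : (0:ℝ) ≤ (s : ℝ) - ℓ + 1)]
        ring
      · have hls' : (s : ℝ) + 1 ≤ (ℓ : ℝ) := by exact_mod_cast Nat.succ_le_of_lt (by omega)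
        rw [if_neg hls, hc, abs_of_nonpos (by linarith : (s : ℝ) - ℓ ≤ 0),
          abs_of_nonpos (by linarith : (s : ℝ) - ℓ + 1 ≤ 0)]
        ring
    · have h0 : m.choose ℓ = 0 := Nat.choose_eq_zero_of_lt (by omega)
      simp [h0]
  rw [Finset.sum_congr rfl hper]
  have hsplit : Finset.range (r + 1) = Finset.range (s + 1) ∪ Finset.Icc (s + 1) r := by
    ext x
    simp only [Finset.mem_union, Finset.mem_range, Finset.mem_Icc]
    omega
  have hdisj : Disjoint (Finset.range (s + 1)) (Finset.Icc (s + 1) r) := by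
    rw [Finset.disjoint_left]
    intro a ha hb
    simp only [Finset.mem_range] at ha
    simp only [Finset.mem_Icc] at hb
    omega
  rw [hsplit, Finset.sum_union hdisj]
  have h1 : ∀ ℓ ∈ Finset.range (s + 1),
      (if ℓ ≤ s then (s : ℝ) else -(s : ℝ)) * ((m.choose ℓ : ℝ) * (k.choose (r - ℓ) : ℝ))
      = (s : ℝ) * ((m.choose ℓ : ℝ) * (k.choose (r - ℓ) : ℝ)) := by
    intro ℓ hl
    rw [if_pos (by simpa using Nat.lt_succ_iff.mp (Finset.mem_range.mp hl))]
  have h2 : ∀ ℓ ∈ Finset.Icc (s + 1) r,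
      (if ℓ ≤ s then (s : ℝ) else -(s : ℝ)) * ((m.choose ℓ : ℝ) * (k.choose (r - ℓ) : ℝ))
      = -((s : ℝ) * ((m.choose ℓ : ℝ) * (k.choose (r - ℓ) : ℝ))) := by
    intro ℓ hl
    have := Finset.mem_Icc.mp hl
    rw [if_neg (by omega)]
    ring
  rw [Finset.sum_congr rfl h1, Finset.sum_congr rfl h2, ← Finset.mul_sum,
    Finset.sum_neg_distrib, ← Finset.mul_sum]
  ring


/-- difference formula for
G(k,s) = [Σ_{ℓ=0}^r |s-ℓ|·C(n-k,ℓ)·C(k,r-ℓ)]/(n-k). -/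
theorem stmt16 (n k r s : ℕ) (hs : s ≤ r) (hk : (k : ℝ) ≤ (n : ℝ) / 2 - 1)
    (hnk : k + 2 ≤ n) :
    (∑ ℓ ∈ Finset.range (r + 1),
        |(s : ℝ) - ℓ| * ((n - (k+1)).choose ℓ : ℝ) * ((k+1).choose (r - ℓ) : ℝ))
      / ((n : ℝ) - (k + 1))
    - (∑ ℓ ∈ Finset.range (r + 1),
        |(s : ℝ) - ℓ| * ((n - k).choose ℓ : ℝ) * (k.choose (r - ℓ) : ℝ))
      / ((n : ℝ) - k)
    = (s : ℝ) *
        ((∑ ℓ ∈ Finset.range (s + 1), ((n - k).choose ℓ : ℝ) * (k.choose (r - ℓ) : ℝ))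
          - ∑ ℓ ∈ Finset.Icc (s + 1) r, ((n - k).choose ℓ : ℝ) * (k.choose (r - ℓ) : ℝ))
        / (((n : ℝ) - k) * ((n : ℝ) - k - 1)) := by
  set m := n - k with hm
  have hm2 : 2 ≤ m := by omega
  have h1 : n - (k + 1) = m - 1 := by omega
  have hc1 : (n : ℝ) - k = (m : ℝ) := by
    rw [hm, Nat.cast_sub (by omega)]
  have hc2 : (n : ℝ) - (k + 1) = (m : ℝ) - 1 := by
    rw [hm, Nat.cast_sub (by omega)]
    ring
  have hmr : (2 : ℝ) ≤ (m : ℝ) := by exact_mod_cast hm2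
  have hm0 : (m : ℝ) ≠ 0 := by linarith
  have hm1 : (m : ℝ) - 1 ≠ 0 := by linarith
  have hK := stmt16_key m k r s hs hm2
  rw [h1, hc1, hc2, div_sub_div _ _ hm1 hm0,
    div_eq_div_iff (mul_ne_zero hm1 hm0) (mul_ne_zero hm0 hm1)]
  linear_combination ((m : ℝ) * ((m : ℝ) - 1)) * hK
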